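/- If a differentiable function ∇ of the form g(Ax), with g : ℝ^m → ℝ μ-strongly convex and A : ℝ^n → ℝ^m linear, is considered, then the composite h(x) = g(Ax) satisfies the Polyak–Łojasiewicz inequality (1/2)‖∇h(x)‖² ≥ μ·σ₂(A)²·(h(x) − h*), where h* = inf h and σ₂(A) is the smallest nonzero singular value of A. -/

import Mathlib

open scoped RealInnerProductSpace

noncomputable section

abbrev Stalk (n : ℕ) : Type := EuclideanSpace ℝ (Fin n)

abbrev C0 {V : Type} [Fintype V] (nv : V → ℕ) : Type :=
  PiLp 2 (fun v : V => Stalk (nv v))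

abbrev C1 {E : Type} [Fintype E] (ne : E → ℕ) : Type :=
  PiLp 2 (fun e : E => Stalk (ne e))

/-- The coboundary operator of a cellular sheaf over a graph with edge set `E`,
oriented with endpoint maps `src` and `tgt`, vertex stalks `Stalk (nv v)`,
edge stalks `Stalk (ne e)` and restriction maps `r v e`. -/
def coboundary {V E : Type} [Fintype V] [Fintype E] (nv : V → ℕ) (ne : E → ℕ)
    (src tgt : E → V)
    (r : (v : V) → (e : E) → (Stalk (nv v) →ₗ[ℝ] Stalk (ne e))) :
    C0 nv →ₗ[ℝ] C1 ne :=
  (WithLp.linearEquiv 2 ℝ (∀ e : E, Stalk (ne e))).symm.toLinearMap ∘ₗ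
    (LinearMap.pi fun e : E =>
      r (src e) e ∘ₗ LinearMap.proj (src e) - r (tgt e) e ∘ₗ LinearMap.proj (tgt e)) ∘ₗ
    (WithLp.linearEquiv 2 ℝ (∀ v : V, Stalk (nv v))).toLinearMap

section AuxPL

variable {F : Type*} [NormedAddCommGroup F] [InnerProductSpace ℝ F]

lemma aux_first_order (f : F → ℝ) (hf : ConvexOn ℝ Set.univ f) {f' : F →L[ℝ] ℝ} {x : F}
    (hd : HasFDerivAt f f' x) (y : F) : f x + f' (y - x) ≤ f y := by
  set φ : ℝ → ℝ := fun t => f (x + t • (y - x)) with hφdef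
  have hφc : ConvexOn ℝ Set.univ φ := by
    have := hf.comp_affineMap (AffineMap.lineMap x y : ℝ →ᵃ[ℝ] F)
    have he : (f ∘ ⇑(AffineMap.lineMap x y : ℝ →ᵃ[ℝ] F)) = φ := by
      funext t
      simp [φ, Function.comp, AffineMap.lineMap_apply, add_comm, vsub_eq_sub]
    rw [he] at this
    simpa using this
  have hline : HasDerivAt (fun t : ℝ => x + t • (y - x)) (y - x) 0 := by
    simpa using ((hasDerivAt_id (0:ℝ)).smul_const (y - x)).const_add x
  have hd0 : HasFDerivAt f f' ((fun t : ℝ => x + t • (y - x)) 0) := by simpa using hd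
  have hφd : HasDerivAt φ (f' (y - x)) 0 := by
    exact hd0.comp_hasDerivAt (0:ℝ) hline
  have := hφc.le_slope_of_hasDerivAt (Set.mem_univ (0:ℝ)) (Set.mem_univ (1:ℝ)) one_pos hφd
  have hs : slope φ 0 1 = f y - f x := by simp [slope, φ]
  rw [hs] at this
  linarith

lemma aux_strong [CompleteSpace F] (f : F → ℝ) (μ : ℝ) (hf : StrongConvexOn Set.univ μ f)
    (hd : Differentiable ℝ f) (x y : F) :
    f x + ⟪gradient f x, y - x⟫ + μ / 2 * ‖y - x‖ ^ 2 ≤ f y := by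
  set ft : F → ℝ := fun z => f z - μ / 2 * ‖z‖ ^ 2 with hftdef
  have hc : ConvexOn ℝ Set.univ ft := strongConvexOn_iff_convex.mp hf
  have hgx : HasGradientAt f (gradient f x) x := (hd x).hasGradientAt
  have hfx : HasFDerivAt f (InnerProductSpace.toDual ℝ F (gradient f x)) x :=
    hasGradientAt_iff_hasFDerivAt.mp hgx
  have hns : HasFDerivAt (fun z : F => ‖z‖ ^ 2) (2 • (innerSL ℝ x)) x :=
    (hasStrictFDerivAt_norm_sq x).hasFDerivAt
  have hft : HasFDerivAt ft
      (InnerProductSpace.toDual ℝ F (gradient f x) - (μ / 2) • (2 • (innerSL ℝ x))) x :=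
    hfx.sub (hns.const_smul (μ / 2))
  have key := aux_first_order ft hc hft y
  have h1 : (InnerProductSpace.toDual ℝ F (gradient f x) -
      (μ / 2) • (2 • (innerSL ℝ x))) (y - x) =
      ⟪gradient f x, y - x⟫ - μ * ⟪x, y - x⟫ := by
    simp [two_smul]
    ring
  rw [h1] at key
  simp only [ft] at key
  have h2 : ‖y - x‖ ^ 2 = ‖y‖ ^ 2 - 2 * ⟪x, y - x⟫ - ‖x‖ ^ 2 := by
    have := norm_sub_sq_real x y
    have h3 : ⟪x, y - x⟫ = ⟪x, y⟫ - ‖x‖^2 := by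
      rw [inner_sub_right, real_inner_self_eq_norm_sq]
    rw [h3]
    rw [norm_sub_sq_real] at *
    nlinarith [norm_sub_sq_real y x, real_inner_comm x y]
  rw [h2]; linarith

lemma aux_eig {n : ℕ} (T : EuclideanSpace ℝ (Fin n) →ₗ[ℝ] EuclideanSpace ℝ (Fin n))
    (hT : T.IsSymmetric) (lam : ℝ)
    (hlam : ∀ t : ℝ, t ≠ 0 →
      Module.End.HasEigenvalue (T : Module.End ℝ (EuclideanSpace ℝ (Fin n))) t → lam ≤ t)
    (v : EuclideanSpace ℝ (Fin n)) (hv : ∀ w, T w = 0 → ⟪v, w⟫ = 0) :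
    lam * ‖v‖ ^ 2 ≤ ⟪v, T v⟫ := by
  have hn : Module.finrank ℝ (EuclideanSpace ℝ (Fin n)) = n := finrank_euclideanSpace_fin
  set b := hT.eigenvectorBasis hn with hb
  set eig := hT.eigenvalues hn with heig
  set c : Fin n → ℝ := fun i => ⟪b i, v⟫ with hc
  have hv' : ∑ i, c i • b i = v := b.sum_repr' v
  have hTb : ∀ i, T (b i) = eig i • b i := fun i =>
    (hT.hasEigenvector_eigenvectorBasis hn i).apply_eq_smul
  have hinner_b : ∀ i, ⟪v, b i⟫ = c i := fun i => real_inner_comm v (b i) ▸ rfl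
  have hTv : T v = ∑ i, (eig i * c i) • b i := by
    conv_lhs => rw [← hv']
    rw [map_sum]
    congr 1; funext i
    rw [map_smul, hTb i, smul_smul, mul_comm]
  have hvTv : ⟪v, T v⟫ = ∑ i, eig i * c i * c i := by
    rw [hTv, inner_sum]
    congr 1; funext i
    rw [real_inner_smul_right, hinner_b i]
  have hvv : (‖v‖:ℝ) ^ 2 = ∑ i, c i * c i := by
    rw [← real_inner_self_eq_norm_sq]
    nth_rewrite 2 [← hv']
    rw [inner_sum]
    congr 1; funext i
    rw [real_inner_smul_right, hinner_b i]
  rw [hvTv, hvv, Finset.mul_sum]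
  apply Finset.sum_le_sum
  intro i _
  rcases eq_or_ne (c i) 0 with h0 | h0
  · simp [h0]
  · have heig0 : eig i ≠ 0 := by
      intro h
      have : T (b i) = 0 := by rw [hTb i, h, zero_smul]
      have := hv (b i) this
      rw [real_inner_comm] at this
      exact h0 this
    have hle : lam ≤ eig i := by
      apply hlam _ heig0
      have := hT.hasEigenvalue_eigenvalues hn i
      simpa using this
    nlinarith [mul_self_nonneg (c i), mul_self_pos.mpr h0]

end AuxPL

lemma aux_core (μ lam G r gap : ℝ) (hμ : 0 < μ) (hlam : 0 < lam) (hr : 0 ≤ r)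
    (h : gap ≤ G * r - μ / 2 * (lam * r ^ 2)) : μ * lam * gap ≤ 1 / 2 * G ^ 2 := by
  nlinarith [sq_nonneg (G - μ * lam * r), mul_pos hμ hlam,
    mul_le_mul_of_nonneg_left h (mul_pos hμ hlam).le]

set_option maxHeartbeats 1000000 in
/-- If `g` is `μ`-strongly convex and differentiable and `A` is linear, then the composite
`h = g ∘ A` satisfies the Polyak–Łojasiewicz inequality
`(1/2)‖∇h(x)‖² ≥ μ·σ₂(A)²·(h(x) − h*)`, where `σ₂(A)` is the smallest nonzero singular
value of `A` (the square root of the smallest nonzero eigenvalue of `AᵀA`). -/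
theorem pl_of_strongly_convex_comp_linear {n m : ℕ}
    (g : EuclideanSpace ℝ (Fin m) → ℝ)
    (A : EuclideanSpace ℝ (Fin n) →ₗ[ℝ] EuclideanSpace ℝ (Fin m))
    (μ : ℝ) (hμ : 0 < μ)
    (hgdiff : Differentiable ℝ g)
    (hg : StrongConvexOn Set.univ μ g)
    (hstar : ℝ)
    (hmin : ∃ x0 : EuclideanSpace ℝ (Fin n),
      (∀ x, g (A x0) ≤ g (A x)) ∧ g (A x0) = hstar) :
    ∀ x : EuclideanSpace ℝ (Fin n),
      μ * (Real.sqrt (sInf {t : ℝ | t ≠ 0 ∧ Module.End.HasEigenvalue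
            (LinearMap.adjoint A ∘ₗ A : Module.End ℝ (EuclideanSpace ℝ (Fin n))) t})) ^ 2
          * (g (A x) - hstar)
        ≤ (1 / 2) * ‖gradient (fun z => g (A z)) x‖ ^ 2 := by
  intro x
  obtain ⟨x0, hx0min, hx0eq⟩ := hmin
  set T : EuclideanSpace ℝ (Fin n) →ₗ[ℝ] EuclideanSpace ℝ (Fin n) :=
    LinearMap.adjoint A ∘ₗ A with hTdef
  set S : Set ℝ := {t : ℝ | t ≠ 0 ∧ Module.End.HasEigenvalue
    (T : Module.End ℝ (EuclideanSpace ℝ (Fin n))) t} with hSdef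
  set lam : ℝ := sInf S with hlamdef
  set w : EuclideanSpace ℝ (Fin m) := gradient g (A x) with hwdef
  -- gradient of the composite
  have hgrad : HasGradientAt (fun z => g (A z)) (LinearMap.adjoint A w) x := by
    rw [hasGradientAt_iff_hasFDerivAt]
    have h1 : HasFDerivAt g
        (InnerProductSpace.toDual ℝ (EuclideanSpace ℝ (Fin m)) w) (A x) :=
      (hgdiff (A x)).hasGradientAt.hasFDerivAt
    have h2 : HasFDerivAt (fun z => A z) (LinearMap.toContinuousLinearMap A) x :=
      (LinearMap.toContinuousLinearMap A).hasFDerivAt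
    have h3 := h1.comp x h2
    have h4 : (InnerProductSpace.toDual ℝ (EuclideanSpace ℝ (Fin m)) w).comp
        (LinearMap.toContinuousLinearMap A)
        = InnerProductSpace.toDual ℝ (EuclideanSpace ℝ (Fin n)) (LinearMap.adjoint A w) := by
      ext v
      simp [LinearMap.adjoint_inner_left]
    rw [h4] at h3
    exact h3
  have hgradeq : gradient (fun z => g (A z)) x = LinearMap.adjoint A w := hgrad.gradient
  rw [hgradeq]
  -- nonnegativity of the gap
  have hgap : 0 ≤ g (A x) - hstar := by
    have := hx0min x
    linarith [hx0eq ▸ this]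
  rcases le_or_gt lam 0 with hlam0 | hlam0
  · rw [Real.sqrt_eq_zero'.mpr hlam0]
    have h0 : μ * (0:ℝ) ^ 2 * (g (A x) - hstar) = 0 := by ring
    rw [h0]
    positivity
  · -- main case
    have hsq : Real.sqrt lam ^ 2 = lam := Real.sq_sqrt hlam0.le
    rw [hsq]
    -- strong convexity inequality
    have hsc := aux_strong g μ hg hgdiff (A x) (A x0)
    set d : EuclideanSpace ℝ (Fin n) := x - x0 with hddef
    have hAd : A x0 - A x = -(A d) := by
      rw [hddef, map_sub]; abel
    -- decomposition of d
    set K : Submodule ℝ (EuclideanSpace ℝ (Fin n)) := LinearMap.ker A with hKdef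
    set d2 : EuclideanSpace ℝ (Fin n) := (K.orthogonalProjectionOnto d : EuclideanSpace ℝ (Fin n))
      with hd2def
    set d1 : EuclideanSpace ℝ (Fin n) := d - d2 with hd1def
    have hd2K : d2 ∈ K := (K.orthogonalProjectionOnto d).2
    have hd1o : d1 ∈ Kᗮ := Submodule.sub_starProjection_mem_orthogonal (K := K) d
    have hAd20 : A d2 = 0 := LinearMap.mem_ker.mp hd2K
    have hAd1 : A d = A d1 := by
      have h5 : A d1 = A d - A d2 := by rw [hd1def]; exact map_sub A d d2
      rw [h5, hAd20, sub_zero]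
    -- symmetry of T
    have hinnT : ∀ z, ⟪z, T z⟫ = ‖A z‖ ^ 2 := fun z => by
      rw [hTdef, LinearMap.comp_apply, LinearMap.adjoint_inner_right,
        real_inner_self_eq_norm_sq]
    have hT : T.IsSymmetric := by
      intro u v
      rw [hTdef, LinearMap.comp_apply, LinearMap.comp_apply,
        LinearMap.adjoint_inner_left, LinearMap.adjoint_inner_right]
    -- eigenvalue lower bound
    have hbdd : BddBelow S := by
      refine ⟨0, fun t ht => ?_⟩
      obtain ⟨ht0, hte⟩ := ht
      obtain ⟨z, hz⟩ := hte.exists_hasEigenvector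
      have hz0 : z ≠ 0 := hz.2
      have hTz : T z = t • z := hz.apply_eq_smul
      have h5 : ⟪z, T z⟫ = ‖A z‖ ^ 2 := hinnT z
      rw [hTz, real_inner_smul_right, real_inner_self_eq_norm_sq] at h5
      have hz2 : 0 < ‖z‖ ^ 2 := pow_pos (norm_pos_iff.mpr hz0) 2
      nlinarith [sq_nonneg ‖A z‖]
    have hlamle : ∀ t : ℝ, t ≠ 0 →
        Module.End.HasEigenvalue (T : Module.End ℝ (EuclideanSpace ℝ (Fin n))) t → lam ≤ t :=
      fun t ht0 hte => csInf_le hbdd ⟨ht0, hte⟩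
    have hvperp : ∀ z, T z = 0 → ⟪d1, z⟫ = 0 := by
      intro z hz
      have hAz : A z = 0 := by
        have h5 : ⟪z, T z⟫ = ‖A z‖ ^ 2 := hinnT z
        rw [hz, inner_zero_right] at h5
        have : ‖A z‖ = 0 := by nlinarith [norm_nonneg (A z)]
        exact norm_eq_zero.mp this
      have hzK : z ∈ K := LinearMap.mem_ker.mpr hAz
      rw [real_inner_comm]
      exact hd1o z hzK
    have heigb : lam * ‖d1‖ ^ 2 ≤ ⟪d1, T d1⟫ := aux_eig T hT lam hlamle d1 hvperp
    have hTd1 : ⟪d1, T d1⟫ = ‖A d1‖ ^ 2 := hinnT d1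
    -- inner product bound
    have hip : ⟪w, A d1⟫ ≤ ‖LinearMap.adjoint A w‖ * ‖d1‖ := by
      have : ⟪w, A d1⟫ = ⟪LinearMap.adjoint A w, d1⟫ := (LinearMap.adjoint_inner_left A d1 w).symm
      rw [this]
      exact real_inner_le_norm _ _
    -- combine strong convexity
    have hkey : g (A x) - hstar ≤ ⟪w, A d1⟫ - μ / 2 * ‖A d1‖ ^ 2 := by
      rw [hAd, hAd1] at hsc
      rw [inner_neg_right, norm_neg] at hsc
      rw [hx0eq] at hsc
      linarith
    set G : ℝ := ‖LinearMap.adjoint A w‖ with hGdef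
    set r : ℝ := ‖d1‖ with hrdef
    have hr0 : 0 ≤ r := norm_nonneg _
    have h6 : g (A x) - hstar ≤ G * r - μ / 2 * (lam * r ^ 2) := by
      have : μ / 2 * (lam * r ^ 2) ≤ μ / 2 * ‖A d1‖ ^ 2 := by
        apply mul_le_mul_of_nonneg_left _ (by linarith)
        rw [← hTd1]; exact heigb
      linarith [hip, hkey]
    have := aux_core μ lam G r (g (A x) - hstar) hμ hlam0 hr0 h6
    linarith
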